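/- Let $A$ be a strictly upper-triangular $n \times n$ integer matrix and $\lambda \in \mathbb{R}^n$, and let $\Delta(A,\lambda) = \{p \in \mathbb{R}^n : \langle p, e_j\rangle \ge 0 \text{ and } \langle p, e_j + \sum_i A^i_j e_i\rangle \le \lambda_j \text{ for all } j\}$. For a nonempty subset $I \subseteq \{1,\dots,n\}$ define $\Xi(I) = \sum (-1)^m \lambda_{i_0} A^{i_0}_{i_1} \cdots A^{i_{m-1}}_{i_m}$, summed over chains $i_0 < \cdots < i_m = \max(I)$ with $\{i_0,\dots,i_m\} \subseteq I$. Suppose $\Xi(I) > 0$ for every nonempty $I \subseteq \{1,\dots,n\}$. Then for every $I \subseteq \{1,\dots,n\}$, the point $p_I$ determined by $\langle p_I, e_j\rangle = 0$ for $j \notin I$ and $\langle p_I, e_j + \sum_i A^i_j e_i\rangle = \lambda_j$ for $j \in I$ is a vertex of $\Delta(A,\lambda)$; moreover $\langle p_I, e_j\rangle > 0$ for $j \in I$ and $\langle p_I, e_j + \sum_i A^i_j e_i\rangle < \lambda_j$ for $j \notin I$. -/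

import Mathlib

open Finset

/-- `Λ(J)`: for `J = {i₀ < ⋯ < i_m}`, the value `(-1)^m λ_{i₀} A^{i₀}_{i₁} ⋯ A^{i_{m-1}}_{i_m}`. -/
noncomputable def chainVal {n : ℕ} (A : Fin n → Fin n → ℤ) (lam : Fin n → ℝ)
    (J : Finset (Fin n)) : ℝ :=
  match J.sort (· ≤ ·) with
  | [] => 0
  | a :: rest =>
      (-1 : ℝ) ^ rest.length * lam a *
        (((a :: rest).zip rest).map (fun p => (A p.1 p.2 : ℝ))).prod

/-- `Ξ(I)`: sum of `Λ(J)` over nonempty `J ⊆ I` with `max J = max I`. -/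
noncomputable def XiVal {n : ℕ} (A : Fin n → Fin n → ℤ) (lam : Fin n → ℝ)
    (I : Finset (Fin n)) : ℝ :=
  ∑ J ∈ I.powerset.filter (fun J => J.max = I.max), chainVal A lam J

/-- **If `Ξ(I) > 0` for all nonempty `I`, then each point `p_I` is a vertex of `Δ(A,λ)`
with strict slack in the non-defining inequalities.** -/
lemma zip_concat {α : Type*} (j : α) : ∀ (rest : List α) (a : α),
    ((a :: (rest ++ [j])).zip (rest ++ [j])) =
      (a :: rest).zip rest ++ [((a :: rest).getLast (by simp), j)]
  | [], a => by simp
  | b :: t, a => by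
    simp only [List.cons_append, List.zip_cons_cons]
    rw [zip_concat j t b]
    simp [List.getLast_cons]

lemma chainVal_singleton {n : ℕ} (A : Fin n → Fin n → ℤ) (lam : Fin n → ℝ) (j : Fin n) :
    chainVal A lam {j} = lam j := by
  simp [chainVal]

lemma sort_insert_max {n : ℕ} {j : Fin n} {S : Finset (Fin n)} (h : ∀ b ∈ S, b < j) :
    (insert j S).sort (· ≤ ·) = S.sort (· ≤ ·) ++ [j] := by
  have hj : j ∉ S := fun hm => lt_irrefl j (h j hm)
  have hperm : List.Perm ((insert j S).sort (· ≤ ·)) (S.sort (· ≤ ·) ++ [j]) := by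
    refine List.Perm.trans ?_ (List.perm_append_singleton _ _).symm
    rw [← Multiset.coe_eq_coe]
    simp [Finset.sort_eq, Finset.insert_val, Multiset.ndinsert_of_notMem (show j ∉ S.val from hj), ← Multiset.cons_coe, Finset.sort_eq]
  refine List.Perm.eq_of_pairwise' (Finset.pairwise_sort _ _) ?_ hperm
  rw [List.pairwise_append]
  refine ⟨Finset.pairwise_sort _ _, by simp, ?_⟩
  intro x hx y hy
  simp at hy; subst hy
  exact (h x ((Finset.mem_sort _).1 hx)).le

lemma chainVal_eq_of_sort {n : ℕ} (A : Fin n → Fin n → ℤ) (lam : Fin n → ℝ)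
    {J : Finset (Fin n)} {a : Fin n} {rest : List (Fin n)}
    (hs : J.sort (· ≤ ·) = a :: rest) :
    chainVal A lam J = (-1 : ℝ) ^ rest.length * lam a *
        (((a :: rest).zip rest).map (fun p => (A p.1 p.2 : ℝ))).prod := by
  unfold chainVal
  rw [hs]

lemma chainVal_insert {n : ℕ} (A : Fin n → Fin n → ℤ) (lam : Fin n → ℝ)
    {J : Finset (Fin n)} (hJ : J.Nonempty) {j : Fin n} (h : ∀ b ∈ J, b < j) :
    chainVal A lam (insert j J) = -(A (J.max' hJ) j : ℝ) * chainVal A lam J := by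
  obtain ⟨a, rest, hs⟩ : ∃ a rest, J.sort (· ≤ ·) = a :: rest := by
    rcases hl : J.sort (· ≤ ·) with _ | ⟨a, rest⟩
    · exfalso
      have := Finset.length_sort (s := J) (· ≤ ·)
      rw [hl] at this
      simp at this
      exact hJ.ne_empty (Finset.card_eq_zero.mp this.symm)
    · exact ⟨a, rest, rfl⟩
  have hs' : (insert j J).sort (· ≤ ·) = a :: (rest ++ [j]) := by
    rw [sort_insert_max h, hs]; rfl
  rw [chainVal_eq_of_sort A lam hs', chainVal_eq_of_sort A lam hs]
  rw [zip_concat]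
  have hmax : (a :: rest).getLast (by simp) = J.max' hJ := by
    rw [Finset.max'_eq_sorted_last, List.getLast_eq_getElem]
    congr 1 <;> rw [hs]
  rw [hmax]
  simp [pow_succ]
  ring

lemma XiVal_insert {n : ℕ} (A : Fin n → Fin n → ℤ) (lam : Fin n → ℝ)
    {S : Finset (Fin n)} {j : Fin n} (h : ∀ b ∈ S, b < j) :
    XiVal A lam (insert j S) =
      lam j - ∑ i ∈ S, (A i j : ℝ) * XiVal A lam (S.filter (· ≤ i)) := by
  classical
  have hj : j ∉ S := fun hm => lt_irrefl j (h j hm)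
  have hmax : (insert j S).max = (j : WithBot (Fin n)) := by
    refine le_antisymm (Finset.max_le_iff.2 fun b hb => ?_) (Finset.le_max (mem_insert_self j S))
    rcases Finset.mem_insert.1 hb with rfl | hb
    · exact le_refl _
    · exact WithBot.coe_le_coe.2 (h b hb).le
  -- index set = image of powerset S under insert j
  have hset : (insert j S).powerset.filter (fun J => J.max = (insert j S).max)
      = S.powerset.image (insert j ·) := by
    rw [hmax]
    ext J
    simp only [mem_filter, mem_powerset, mem_image]
    constructor
    · rintro ⟨hsub, hm⟩
      have hjJ : j ∈ J := Finset.mem_of_max hm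
      refine ⟨J.erase j, ?_, ?_⟩
      · intro x hx
        rcases Finset.mem_erase.1 hx with ⟨hne, hxJ⟩
        rcases Finset.mem_insert.1 (hsub hxJ) with h1 | h1
        · exact absurd h1 hne
        · exact h1
      · exact Finset.insert_erase hjJ
    · rintro ⟨J', hJ', rfl⟩
      refine ⟨insert_subset_insert _ hJ', ?_⟩
      refine le_antisymm (Finset.max_le_iff.2 fun b hb => ?_) (Finset.le_max (mem_insert_self j J'))
      rcases Finset.mem_insert.1 hb with rfl | hb
      · exact le_refl _
      · exact WithBot.coe_le_coe.2 (h b (hJ' hb)).le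
  rw [XiVal, hset, Finset.sum_image (by
    intro J1 h1 J2 h2 he
    have n1 : j ∉ J1 := fun hm => hj (mem_powerset.1 h1 hm)
    have n2 : j ∉ J2 := fun hm => hj (mem_powerset.1 h2 hm)
    simp only at he
    rw [← Finset.erase_insert n1, ← Finset.erase_insert n2, he])]
  -- split off ∅
  rw [← Finset.add_sum_erase _ _ (Finset.empty_mem_powerset S)]
  have he0 : insert j (∅ : Finset (Fin n)) = {j} := rfl
  rw [he0, chainVal_singleton]
  -- group the rest by max'
  have hfib : ∀ J ∈ (S.powerset.erase ∅), (fun J => if hn : J.Nonempty then J.max' hn else j) J ∈ S := by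
    intro J hJ
    rcases Finset.mem_erase.1 hJ with ⟨hne, hsub⟩
    have hn : J.Nonempty := Finset.nonempty_iff_ne_empty.2 hne
    simp only [dif_pos hn]
    exact mem_powerset.1 hsub (J.max'_mem hn)
  rw [← Finset.sum_fiberwise_of_maps_to hfib]
  have hinner : ∀ i ∈ S,
      (∑ J ∈ (S.powerset.erase ∅).filter
          (fun J => (if hn : J.Nonempty then J.max' hn else j) = i),
        chainVal A lam (insert j J))
      = -(A i j : ℝ) * XiVal A lam (S.filter (· ≤ i)) := by
    intro i hi
    have hmaxi : (S.filter (· ≤ i)).max = (i : WithBot (Fin n)) := by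
      apply le_antisymm
      · exact Finset.max_le_iff.2 fun b hb => WithBot.coe_le_coe.2 (Finset.mem_filter.1 hb).2
      · exact Finset.le_max (Finset.mem_filter.2 ⟨hi, le_refl i⟩)
    have hsets : (S.powerset.erase ∅).filter
          (fun J => (if hn : J.Nonempty then J.max' hn else j) = i)
        = (S.filter (· ≤ i)).powerset.filter (fun J => J.max = (S.filter (· ≤ i)).max) := by
      rw [hmaxi]
      ext J
      simp only [mem_filter, mem_powerset, mem_erase, Finset.mem_filter]
      constructor
      · rintro ⟨⟨hne, hsub⟩, hm⟩
        have hn : J.Nonempty := Finset.nonempty_iff_ne_empty.2 hne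
        rw [dif_pos hn] at hm
        refine ⟨fun x hx => Finset.mem_filter.2 ⟨hsub hx, hm ▸ J.le_max' x hx⟩, ?_⟩
        rw [← hm]; exact (Finset.coe_max' hn).symm ▸ rfl
      · rintro ⟨hsub, hm⟩
        have hn : J.Nonempty := by
          rcases Finset.eq_empty_or_nonempty J with rfl | hn
          · simp at hm
          · exact hn
        refine ⟨⟨hn.ne_empty, fun x hx => (Finset.mem_filter.1 (hsub hx)).1⟩, ?_⟩
        rw [dif_pos hn]
        exact WithBot.coe_injective ((Finset.coe_max' hn).trans hm)
      
    rw [hsets, XiVal, Finset.mul_sum]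
    apply Finset.sum_congr rfl
    intro J hJ
    rcases Finset.mem_filter.1 hJ with ⟨hsub, hm⟩
    rw [hmaxi] at hm
    have hn : J.Nonempty := by
      rcases Finset.eq_empty_or_nonempty J with rfl | hn
      · simp at hm
      · exact hn
    have hmi : J.max' hn = i := WithBot.coe_injective ((Finset.coe_max' hn).trans hm)
    rw [chainVal_insert A lam hn (fun b hb => h b (Finset.mem_powerset.1 hsub hb |> Finset.mem_filter.1 |>.1)), hmi]
  rw [Finset.sum_congr rfl hinner]
  rw [sub_eq_add_neg, ← Finset.sum_neg_distrib]
  congr 1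
  apply Finset.sum_congr rfl
  intro i _
  ring

section main
variable {n : ℕ} (A : Fin n → Fin n → ℤ)
    (hA : ∀ i j : Fin n, j ≤ i → A i j = 0) (lam : Fin n → ℝ)
    (I : Finset (Fin n)) (p : Fin n → ℝ)
    (hp0 : ∀ j ∉ I, p j = 0)
    (hp1 : ∀ j ∈ I, p j + ∑ i, (A i j : ℝ) * p i = lam j)

include hA hp0 in
lemma sum_reduce (j : Fin n) :
    ∑ i, (A i j : ℝ) * p i = ∑ i ∈ I.filter (· < j), (A i j : ℝ) * p i := by
  symm
  apply Finset.sum_subset (Finset.subset_univ _)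
  intro i _ hi
  by_cases hij : i < j
  · have : i ∉ I := fun hiI => hi (Finset.mem_filter.2 ⟨hiI, hij⟩)
    rw [hp0 i this, mul_zero]
  · rw [hA i j (not_lt.1 hij), Int.cast_zero, zero_mul]

include hA hp0 hp1 in
lemma p_formula : ∀ j : Fin n, j ∈ I → p j = XiVal A lam (insert j (I.filter (· < j))) := by
  intro j
  obtain ⟨m, hm⟩ : ∃ m, (j : ℕ) = m := ⟨_, rfl⟩
  induction m using Nat.strongRecOn generalizing j with
  | ind m IH =>
  intro hj
  have hlt : ∀ b ∈ I.filter (· < j), b < j := fun b hb => (Finset.mem_filter.1 hb).2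
  rw [XiVal_insert A lam hlt]
  have hpj := hp1 j hj
  rw [sum_reduce A hA I p hp0 j] at hpj
  have hterm : ∀ i ∈ I.filter (· < j),
      (A i j : ℝ) * p i
        = (A i j : ℝ) * XiVal A lam ((I.filter (· < j)).filter (· ≤ i)) := by
    intro i hi
    rcases Finset.mem_filter.1 hi with ⟨hiI, hij⟩
    congr 1
    rw [IH i.val (hm ▸ hij) i rfl hiI]
    congr 1
    ext b
    simp only [Finset.mem_insert, Finset.mem_filter]
    constructor
    · rintro (rfl | ⟨hbI, hbi⟩)
      · exact ⟨⟨hiI, hij⟩, le_refl _⟩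
      · exact ⟨⟨hbI, hbi.trans hij⟩, hbi.le⟩
    · rintro ⟨⟨hbI, _⟩, hbi⟩
      rcases lt_or_eq_of_le hbi with hbi | rfl
      · exact Or.inr ⟨hbI, hbi⟩
      · exact Or.inl rfl
  rw [Finset.sum_congr rfl hterm] at hpj
  linarith
end main

section rest
variable {n : ℕ} {A : Fin n → Fin n → ℤ}
    (hA : ∀ i j : Fin n, j ≤ i → A i j = 0) {lam : Fin n → ℝ}
    (hXi : ∀ I : Finset (Fin n), I.Nonempty → 0 < XiVal A lam I)
    {I : Finset (Fin n)} {p : Fin n → ℝ}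
    (hp0 : ∀ j ∉ I, p j = 0)
    (hp1 : ∀ j ∈ I, p j + ∑ i, (A i j : ℝ) * p i = lam j)

include hA hp0 hp1 in
lemma slack_formula (j : Fin n) :
    ∑ i, (A i j : ℝ) * p i = lam j - XiVal A lam (insert j (I.filter (· < j))) := by
  have hlt : ∀ b ∈ I.filter (· < j), b < j := fun b hb => (Finset.mem_filter.1 hb).2
  rw [XiVal_insert A lam hlt, sum_reduce A hA I p hp0 j]
  rw [sub_sub_cancel]
  apply Finset.sum_congr rfl
  intro i hi
  rcases Finset.mem_filter.1 hi with ⟨hiI, hij⟩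
  congr 1
  rw [p_formula A hA lam I p hp0 hp1 i hiI]
  congr 1
  ext b
  simp only [Finset.mem_insert, Finset.mem_filter]
  constructor
  · rintro (rfl | ⟨hbI, hbi⟩)
    · exact ⟨⟨hiI, hij⟩, le_refl _⟩
    · exact ⟨⟨hbI, hbi.trans hij⟩, hbi.le⟩
  · rintro ⟨⟨hbI, _⟩, hbi⟩
    rcases lt_or_eq_of_le hbi with hbi | rfl
    · exact Or.inr ⟨hbI, hbi⟩
    · exact Or.inl rfl

include hA hXi hp0 hp1 in
lemma p_pos : ∀ j ∈ I, 0 < p j := by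
  intro j hj
  rw [p_formula A hA lam I p hp0 hp1 j hj]
  exact hXi _ ⟨j, Finset.mem_insert_self _ _⟩

include hA hXi hp0 hp1 in
lemma p_slack : ∀ j ∉ I, p j + ∑ i, (A i j : ℝ) * p i < lam j := by
  intro j hj
  rw [hp0 j hj, zero_add, slack_formula hA hp0 hp1 j]
  have := hXi (insert j (I.filter (· < j))) ⟨j, Finset.mem_insert_self _ _⟩
  linarith

include hA hp0 hp1 in
lemma p_uniq (q : Fin n → ℝ) (hq0 : ∀ j ∉ I, q j = 0)
    (hq1 : ∀ j ∈ I, q j + ∑ i, (A i j : ℝ) * q i = lam j) : q = p := by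
  funext j
  obtain ⟨m, hm⟩ : ∃ m, (j : ℕ) = m := ⟨_, rfl⟩
  induction m using Nat.strongRecOn generalizing j with
  | ind m IH =>
  by_cases hj : j ∈ I
  · have e1 := hp1 j hj
    have e2 := hq1 j hj
    rw [sum_reduce A hA I p hp0 j] at e1
    rw [sum_reduce A hA I q hq0 j] at e2
    have : ∑ i ∈ I.filter (· < j), (A i j : ℝ) * q i
        = ∑ i ∈ I.filter (· < j), (A i j : ℝ) * p i := by
      apply Finset.sum_congr rfl
      intro i hi
      rw [IH i.val (hm ▸ (Finset.mem_filter.1 hi).2) i rfl]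
    rw [this] at e2
    linarith
  · rw [hp0 j hj, hq0 j hj]
end rest

theorem pI_is_vertex {n : ℕ} (A : Fin n → Fin n → ℤ)
    (hA : ∀ i j : Fin n, j ≤ i → A i j = 0) (lam : Fin n → ℝ)
    (hXi : ∀ I : Finset (Fin n), I.Nonempty → 0 < XiVal A lam I)
    (I : Finset (Fin n)) (p : Fin n → ℝ)
    (hp0 : ∀ j ∉ I, p j = 0)
    (hp1 : ∀ j ∈ I, p j + ∑ i, (A i j : ℝ) * p i = lam j) :
    p ∈ Set.extremePoints ℝ
        {q : Fin n → ℝ | ∀ j, 0 ≤ q j ∧ q j + ∑ i, (A i j : ℝ) * q i ≤ lam j} ∧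
    (∀ j ∈ I, 0 < p j) ∧
    (∀ j ∉ I, p j + ∑ i, (A i j : ℝ) * p i < lam j) := by
  have hpos := p_pos hA hXi hp0 hp1
  have hslack := p_slack hA hXi hp0 hp1
  have hmem : p ∈ {q : Fin n → ℝ | ∀ j, 0 ≤ q j ∧ q j + ∑ i, (A i j : ℝ) * q i ≤ lam j} := by
    intro j
    by_cases hj : j ∈ I
    · exact ⟨(hpos j hj).le, le_of_eq (hp1 j hj)⟩
    · exact ⟨le_of_eq (hp0 j hj).symm, (hslack j hj).le⟩
  refine ⟨⟨hmem, ?_⟩, hpos, hslack⟩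
  rintro x hx y hy ⟨a, b, ha, hb, hab, hsum⟩
  -- evaluate the combination
  have hcomb : ∀ j : Fin n, a * x j + b * y j = p j := by
    intro j
    have := congrFun hsum j
    simpa using this
  have hcomb2 : ∀ j : Fin n,
      a * (x j + ∑ i, (A i j : ℝ) * x i) + b * (y j + ∑ i, (A i j : ℝ) * y i)
        = p j + ∑ i, (A i j : ℝ) * p i := by
    intro j
    have : ∑ i, (A i j : ℝ) * p i
        = a * ∑ i, (A i j : ℝ) * x i + b * ∑ i, (A i j : ℝ) * y i := by
      rw [Finset.mul_sum, Finset.mul_sum, ← Finset.sum_add_distrib]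
      apply Finset.sum_congr rfl
      intro i _
      rw [← hcomb i]; ring
    rw [this, ← hcomb j]; ring
  -- zero coordinates
  have hx0 : ∀ j ∉ I, x j = 0 ∧ y j = 0 := by
    intro j hj
    have h0 : a * x j + b * y j = 0 := by rw [hcomb j, hp0 j hj]
    have hx1 := (hx j).1
    have hy1 := (hy j).1
    constructor <;> nlinarith
  -- tight constraints
  have hx1 : ∀ j ∈ I, (x j + ∑ i, (A i j : ℝ) * x i = lam j)
      ∧ (y j + ∑ i, (A i j : ℝ) * y i = lam j) := by
    intro j hj
    have he : a * (x j + ∑ i, (A i j : ℝ) * x i) + b * (y j + ∑ i, (A i j : ℝ) * y i)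
        = lam j := by rw [hcomb2 j, hp1 j hj]
    have h1 := (hx j).2
    have h2 := (hy j).2
    have hl : a * lam j + b * lam j = lam j := by rw [← add_mul, hab, one_mul]
    constructor
    · by_contra hne
      have hlt := lt_of_le_of_ne h1 hne
      linarith [mul_lt_mul_of_pos_left hlt ha, mul_le_mul_of_nonneg_left h2 hb.le]
    · by_contra hne
      have hlt := lt_of_le_of_ne h2 hne
      linarith [mul_lt_mul_of_pos_left hlt hb, mul_le_mul_of_nonneg_left h1 ha.le]
  · exact p_uniq hA hp0 hp1 x (fun j hj => (hx0 j hj).1) (fun j hj => (hx1 j hj).1)
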